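/- arXiv:1611.00245 — 7 statements merged into one kernel-verified Lean document; each statement's English description precedes it below -/
import Mathlib

section
/- Let ℓ be a prime number with ℓ > 3 and let n be a natural number with 1 ≤ n < ℓ. Then the tuple (m₁, m₂, m₃, a₁, a₂, a₃) = (n, (2n) mod ℓ, n, 1, (ℓ−1)/2, 1) is a level-ℓ junior ghost datum on the theta graph; moreover a₁ + a₂ + a₃ = (ℓ+3)/2, so its age is (ℓ+3)/(2ℓ) < 1. -/
/-- The operation `a ⊙ m := a * m / gcd(m, ℓ)` (exact division since `gcd(m, ℓ) ∣ m`). -/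
def odot (ℓ a m : ℕ) : ℕ := a * m / Nat.gcd m ℓ

/-- A level-`ℓ` junior ghost datum on the theta graph (two vertices joined by three
edges, edges 1 and 3 oriented from the first vertex to the second, edge 2 opposite). -/
def IsJuniorGhostDatum (ℓ m₁ m₂ m₃ a₁ a₂ a₃ : ℕ) : Prop :=
  m₁ < ℓ ∧ m₂ < ℓ ∧ m₃ < ℓ ∧
  1 ≤ a₁ ∧ a₁ < ℓ ∧ 1 ≤ a₂ ∧ a₂ < ℓ ∧ 1 ≤ a₃ ∧ a₃ < ℓ ∧
  m₂ ≡ m₁ + m₃ [MOD ℓ] ∧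
  Nat.gcd m₁ ℓ ∣ a₁ ∧ Nat.gcd m₂ ℓ ∣ a₂ ∧ Nat.gcd m₃ ℓ ∣ a₃ ∧
  odot ℓ a₁ m₁ ≡ odot ℓ a₃ m₃ [MOD ℓ] ∧
  odot ℓ a₁ m₁ + odot ℓ a₂ m₂ ≡ 0 [MOD ℓ] ∧
  a₁ + a₂ + a₃ < ℓ

theorem prime_gt_three_junior_ghost_datum (ℓ n : ℕ) (hp : ℓ.Prime) (hℓ : 3 < ℓ)
    (hn1 : 1 ≤ n) (hn : n < ℓ) :
    IsJuniorGhostDatum ℓ n ((2 * n) % ℓ) n 1 ((ℓ - 1) / 2) 1 ∧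
    1 + (ℓ - 1) / 2 + 1 = (ℓ + 3) / 2 ∧
    ((ℓ : ℚ) + 3) / (2 * ℓ) < 1 := by
  obtain ⟨k, hk⟩ := hp.odd_of_ne_two (by omega)
  -- basic facts
  have hℓ0 : 0 < ℓ := by omega
  have hndvd : ¬ ℓ ∣ n := fun h => by have := Nat.le_of_dvd (by omega) h; omega
  have hg1 : Nat.gcd n ℓ = 1 := (Nat.Coprime.symm ((hp.coprime_iff_not_dvd).mpr hndvd))
  have h2dvd : ¬ ℓ ∣ 2 * n := by
    intro h
    rcases (Nat.Prime.dvd_mul hp).mp h with h2 | h2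
    · have := Nat.le_of_dvd (by omega) h2; omega
    · exact hndvd h2
  have hm2dvd : ¬ ℓ ∣ (2 * n) % ℓ := by
    intro h
    exact h2dvd ((Nat.modEq_zero_iff_dvd).mp (((Nat.mod_modEq (2 * n) ℓ).symm).trans
      ((Nat.modEq_zero_iff_dvd).mpr h)))
  have hg2 : Nat.gcd ((2 * n) % ℓ) ℓ = 1 :=
    (Nat.Coprime.symm ((hp.coprime_iff_not_dvd).mpr hm2dvd))
  have ho1 : odot ℓ 1 n = n := by simp [odot, hg1]
  have ho2 : odot ℓ ((ℓ - 1) / 2) ((2 * n) % ℓ) = ((ℓ - 1) / 2) * ((2 * n) % ℓ) := by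
    simp [odot, hg2]
  have ha2 : (ℓ - 1) / 2 = k := by omega
  refine ⟨⟨by omega, Nat.mod_lt _ hℓ0, by omega, le_refl 1, by omega, by omega, by omega,
    le_refl 1, by omega, ?_, by simp [hg1], by simp [hg2], by simp [hg1], ?_, ?_, by omega⟩,
    by omega, ?_⟩
  · calc (2 * n) % ℓ ≡ 2 * n [MOD ℓ] := Nat.mod_modEq _ _
      _ = n + n := by ring
  · rw [ho1]
  · rw [ho1, ho2, ha2]
    calc n + k * ((2 * n) % ℓ) ≡ n + k * (2 * n) [MOD ℓ] :=
          Nat.ModEq.add_left _ ((Nat.mod_modEq _ _).mul_left _)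
      _ = ℓ * n := by rw [hk]; ring
      _ ≡ 0 [MOD ℓ] := (Nat.modEq_zero_iff_dvd).mpr (dvd_mul_right _ _)
  · rw [div_lt_one (by positivity)]
    have : (4 : ℚ) ≤ ℓ := by exact_mod_cast (by omega : (4:ℕ) ≤ ℓ)
    linarith
end

section
/- Let ℓ ≥ 2 and k ≥ 1 be natural numbers. If (m₁, m₂, m₃, a₁, a₂, a₃) is a level-ℓ junior ghost datum on the theta graph, then (k·m₁, k·m₂, k·m₃, k·a₁, k·a₂, k·a₃) is a level-(k·ℓ) junior ghost datum on the theta graph. -/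
lemma odot_scale (ℓ k a m : ℕ) (hk : 1 ≤ k) :
    odot (k * ℓ) (k * a) (k * m) = k * odot ℓ a m := by
  unfold odot
  rw [Nat.gcd_mul_left]
  have hg : Nat.gcd m ℓ ∣ a * m := Dvd.dvd.mul_left (Nat.gcd_dvd_left m ℓ) a
  have : k * a * (k * m) = k * (k * (a * m)) := by ring
  rw [this, Nat.mul_div_mul_left _ _ hk, Nat.mul_div_assoc k hg]

theorem junior_ghost_datum_scale (ℓ k m₁ m₂ m₃ a₁ a₂ a₃ : ℕ) (hℓ : 2 ≤ ℓ) (hk : 1 ≤ k)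
    (h : IsJuniorGhostDatum ℓ m₁ m₂ m₃ a₁ a₂ a₃) :
    IsJuniorGhostDatum (k * ℓ) (k * m₁) (k * m₂) (k * m₃) (k * a₁) (k * a₂) (k * a₃) := by
  obtain ⟨h1, h2, h3, h4, h5, h6, h7, h8, h9, h10, h11, h12, h13, h14, h15, h16⟩ := h
  refine ⟨(Nat.mul_lt_mul_left hk).mpr h1, (Nat.mul_lt_mul_left hk).mpr h2,
    (Nat.mul_lt_mul_left hk).mpr h3,
    Nat.one_le_iff_ne_zero.mpr (by positivity), (Nat.mul_lt_mul_left hk).mpr h5,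
    Nat.one_le_iff_ne_zero.mpr (by positivity), (Nat.mul_lt_mul_left hk).mpr h7,
    Nat.one_le_iff_ne_zero.mpr (by positivity), (Nat.mul_lt_mul_left hk).mpr h9,
    ?_, ?_, ?_, ?_, ?_, ?_, ?_⟩
  · have := h10.mul_left' (c := k); simpa [mul_add] using this
  · rw [Nat.gcd_mul_left]; exact Nat.mul_dvd_mul_left k h11
  · rw [Nat.gcd_mul_left]; exact Nat.mul_dvd_mul_left k h12
  · rw [Nat.gcd_mul_left]; exact Nat.mul_dvd_mul_left k h13
  · rw [odot_scale ℓ k a₁ m₁ hk, odot_scale ℓ k a₃ m₃ hk]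
    exact h14.mul_left' (c := k)
  · rw [odot_scale ℓ k a₁ m₁ hk, odot_scale ℓ k a₂ m₂ hk]
    have := h15.mul_left' (c := k)
    simpa [mul_add] using this
  · calc k * a₁ + k * a₂ + k * a₃ = k * (a₁ + a₂ + a₃) := by ring
    _ < k * ℓ := (Nat.mul_lt_mul_left hk).mpr h16
end

section
/- If a natural number ℓ ≥ 2 has a prime divisor p with p > 3, then there exists a level-ℓ junior ghost datum on the theta graph. -/
theorem exists_junior_ghost_datum_of_prime_factor_gt_three (ℓ p : ℕ) (hℓ : 2 ≤ ℓ)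
    (hp : p.Prime) (hpℓ : p ∣ ℓ) (hp3 : 3 < p) :
    ∃ m₁ m₂ m₃ a₁ a₂ a₃ : ℕ, IsJuniorGhostDatum ℓ m₁ m₂ m₃ a₁ a₂ a₃ := by
  obtain ⟨q, rfl⟩ := hpℓ
  rcases Nat.eq_zero_or_pos q with rfl | hq
  · simp at hℓ
  have h4 : p ≠ 4 := fun h => by rw [h] at hp; norm_num at hp
  have hp5 : 5 ≤ p := by omega
  obtain ⟨s, hs⟩ : Odd p := hp.odd_of_ne_two (by omega)
  have hs2 : 2 ≤ s := by omega
  -- gcd facts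
  have g1 : Nat.gcd q (p * q) = q := Nat.gcd_eq_left ⟨p, (mul_comm p q)⟩
  have gcd2p : Nat.gcd 2 p = 1 :=
    (Nat.Prime.coprime_iff_not_dvd Nat.prime_two).mpr (fun ⟨c, hc⟩ => by omega)
  have g2 : Nat.gcd (2 * q) (p * q) = q := by
    rw [Nat.gcd_mul_right, gcd2p, one_mul]
  have o1 : odot (p * q) q q = q := by
    rw [odot, g1, Nat.mul_div_cancel _ hq]
  have o2 : odot (p * q) (q * s) (2 * q) = s * (2 * q) := by
    rw [odot, g2, show q * s * (2 * q) = s * (2 * q) * q by ring,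
      Nat.mul_div_cancel _ hq]
  refine ⟨q, 2 * q, q, q, q * s, q, ?_, ?_, ?_, ?_, ?_, ?_, ?_, ?_, ?_, ?_, ?_, ?_, ?_, ?_, ?_, ?_⟩
  · nlinarith [hs, hq, hs2]
  · exact (Nat.mul_lt_mul_right hq).mpr (by omega)
  · nlinarith [hs, hq, hs2]
  · exact hq
  · nlinarith [hs, hq, hs2]
  · exact Nat.one_le_iff_ne_zero.mpr (by positivity)
  · nlinarith [hs, hq, hs2]
  · exact hq
  · nlinarith [hs, hq, hs2]
  · exact (by rw [two_mul] : 2 * q = q + q) ▸ Nat.ModEq.refl _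
  · rw [g1]
  · rw [g2]; exact Dvd.intro s rfl
  · rw [g1]
  · exact Nat.ModEq.refl _
  · rw [o1, o2]
    have : q + s * (2 * q) = p * q := by rw [hs]; ring
    rw [this]
    exact (Nat.modEq_zero_iff_dvd).mpr dvd_rfl
  · have : q + q * s + q = q * (s + 2) := by ring
    rw [this]
    nlinarith [hs, hq, hs2]
end

section
/- If ℓ is a natural number divisible by 8, then there exists a level-ℓ junior ghost datum on the theta graph (namely the scaling of the level-8 datum (1, 3, 2, 2, 2, 2) by k = ℓ/8). -/
theorem exists_junior_ghost_datum_of_eight_dvd (ℓ : ℕ) (hℓ : 0 < ℓ) (h : 8 ∣ ℓ) :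
    IsJuniorGhostDatum ℓ (ℓ / 8 * 1) (ℓ / 8 * 3) (ℓ / 8 * 2) (ℓ / 8 * 2) (ℓ / 8 * 2)
      (ℓ / 8 * 2) := by
  obtain ⟨k, rfl⟩ := h
  have hk : 0 < k := by omega
  have h8 : 8 * k / 8 = k := Nat.mul_div_cancel_left k (by norm_num)
  have g1 : Nat.gcd (k * 1) (8 * k) = k := by
    rw [mul_comm k 1, Nat.gcd_mul_right]; norm_num
  have g2 : Nat.gcd (k * 3) (8 * k) = k := by
    rw [mul_comm k 3, Nat.gcd_mul_right]; norm_num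
  have g3 : Nat.gcd (k * 2) (8 * k) = 2 * k := by
    rw [mul_comm k 2, Nat.gcd_mul_right]; norm_num
  unfold IsJuniorGhostDatum odot
  rw [h8, g1, g2, g3]
  have e1 : k * 2 * (k * 1) / k = 2 * k := by
    rw [Nat.div_eq_iff_eq_mul_left hk ⟨2 * k, by ring⟩]; ring
  have e2 : k * 2 * (k * 3) / k = 6 * k := by
    rw [Nat.div_eq_iff_eq_mul_left hk ⟨6 * k, by ring⟩]; ring
  have e3 : k * 2 * (k * 2) / (2 * k) = 2 * k := by
    rw [Nat.div_eq_iff_eq_mul_left (by omega) ⟨2 * k, by ring⟩]; ring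
  rw [e1, e2, e3]
  refine ⟨by omega, by omega, by omega, by omega, by omega, by omega, by omega,
    by omega, by omega, ?_, ⟨2, by ring⟩, ⟨2, by ring⟩, ⟨1, by ring⟩,
    Nat.ModEq.refl _, ?_, by omega⟩
  · show _ % _ = _ % _; congr 1; ring
  · show (2*k+6*k) % (8*k) = 0 % (8*k)
    rw [show 2*k+6*k = 8*k by ring, Nat.mod_self, Nat.zero_mod]
end

section
/- If ℓ is a natural number divisible by 9, then there exists a level-ℓ junior ghost datum on the theta graph (namely the scaling of the level-9 datum (1, 2, 1, 1, 4, 1) by k = ℓ/9). -/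
theorem exists_junior_ghost_datum_of_nine_dvd (ℓ : ℕ) (hℓ : 0 < ℓ) (h : 9 ∣ ℓ) :
    IsJuniorGhostDatum ℓ (ℓ / 9 * 1) (ℓ / 9 * 2) (ℓ / 9 * 1) (ℓ / 9 * 1) (ℓ / 9 * 4)
      (ℓ / 9 * 1) := by
  obtain ⟨k, rfl⟩ := h
  have hk : 0 < k := by omega
  have hdiv : 9 * k / 9 = k := Nat.mul_div_cancel_left k (by norm_num)
  rw [hdiv]
  have hg1 : Nat.gcd (k * 1) (9 * k) = k := by
    rw [mul_one, mul_comm]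
    exact Nat.gcd_eq_left ⟨9, rfl⟩
  have hg2 : Nat.gcd (k * 2) (9 * k) = k := by
    rw [mul_comm 9 k, Nat.gcd_mul_left]
    norm_num
  have ho1 : odot (9 * k) (k * 1) (k * 1) = k := by
    rw [odot, hg1]
    rw [mul_one]
    exact Nat.mul_div_cancel k hk
  have ho2 : odot (9 * k) (k * 4) (k * 2) = 8 * k := by
    rw [odot, hg2]
    rw [show k * 4 * (k * 2) = k * (8 * k) by ring]
    exact Nat.mul_div_cancel_left _ hk
  refine ⟨by omega, by omega, by omega, by omega, by omega, by omega, by omega, by omega,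
    by omega, ?_, ?_, ?_, ?_, ?_, ?_, by omega⟩
  · show k * 2 % (9 * k) = (k * 1 + k * 1) % (9 * k)
    ring_nf
  · rw [hg1]; exact ⟨1, rfl⟩
  · rw [hg2]; exact ⟨4, rfl⟩
  · rw [hg1]; exact ⟨1, rfl⟩
  · rw [ho1]
  · rw [ho1, ho2, show k + 8 * k = 9 * k by ring]
    exact (Nat.modEq_zero_iff_dvd).mpr dvd_rfl
end

section
/- For ℓ = 12 there is no level-12 junior ghost datum on the theta graph: there exist no natural numbers m₁, m₂, m₃ < 12 and a₁, a₂, a₃ with 1 ≤ aᵢ < 12 such that m₂ ≡ m₁ + m₃ (mod 12), gcd(mᵢ, 12) divides aᵢ for i = 1,2,3, a₁ ⊙ m₁ ≡ a₃ ⊙ m₃ (mod 12), a₁ ⊙ m₁ + a₂ ⊙ m₂ ≡ 0 (mod 12), and a₁ + a₂ + a₃ < 12. -/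
set_option maxHeartbeats 2000000 in
/-- Exhaustive finite check covering all potential junior ghost data at level 12. -/
theorem key12 : ∀ m₁ ∈ Finset.range 12, ∀ m₃ ∈ Finset.range 12,
    ∀ a₁ ∈ Finset.range 10, ∀ a₂ ∈ Finset.range (11 - a₁), ∀ a₃ ∈ Finset.range (12 - a₁ - a₂),
    ¬ (Nat.gcd m₁ 12 ∣ a₁ ∧ Nat.gcd ((m₁ + m₃) % 12) 12 ∣ a₂ ∧ Nat.gcd m₃ 12 ∣ a₃ ∧
       odot 12 a₁ m₁ % 12 = odot 12 a₃ m₃ % 12 ∧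
       (odot 12 a₁ m₁ + odot 12 a₂ ((m₁ + m₃) % 12)) % 12 = 0 ∧
       1 ≤ a₁ ∧ 1 ≤ a₂ ∧ 1 ≤ a₃ ∧ a₁ + a₂ + a₃ < 12) := by decide

theorem no_junior_ghost_datum_level_twelve :
    ¬ ∃ m₁ m₂ m₃ a₁ a₂ a₃ : ℕ, IsJuniorGhostDatum 12 m₁ m₂ m₃ a₁ a₂ a₃ := by
  rintro ⟨m₁, m₂, m₃, a₁, a₂, a₃, h1, h2, h3, h4, h5, h6, h7, h8, h9,
    hmod, hd1, hd2, hd3, he1, he2, hsum⟩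
  have hm₂ : m₂ = (m₁ + m₃) % 12 := by
    have := hmod
    unfold Nat.ModEq at this
    omega
  exact key12 m₁ (Finset.mem_range.mpr h1) m₃ (Finset.mem_range.mpr h3)
    a₁ (Finset.mem_range.mpr (by omega)) a₂ (Finset.mem_range.mpr (by omega))
    a₃ (Finset.mem_range.mpr (by omega))
    ⟨hd1, hm₂ ▸ hd2, hd3, he1, by rw [← hm₂]; exact he2, h4, h6, h8, hsum⟩
end

section
/- For ℓ = 12, the tuple (m₁, m₂, m₃, m₄, a₁, a₂, a₃, a₄) = (1, 5, 2, 2, 2, 2, 2, 2) is a level-12 junior ghost datum on the two-vertex graph with four edges. (Hence the locus of noncanonical singularities of the moduli space of level-12 curves has a component of codimension 4.) -/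
/-- A level-`ℓ` junior ghost datum on the two-vertex graph with four edges
(edges 1, 3, 4 oriented from the first vertex to the second, edge 2 opposite). -/
def IsJuniorGhostDatum4 (ℓ m₁ m₂ m₃ m₄ a₁ a₂ a₃ a₄ : ℕ) : Prop :=
  m₁ < ℓ ∧ m₂ < ℓ ∧ m₃ < ℓ ∧ m₄ < ℓ ∧
  1 ≤ a₁ ∧ a₁ < ℓ ∧ 1 ≤ a₂ ∧ a₂ < ℓ ∧ 1 ≤ a₃ ∧ a₃ < ℓ ∧ 1 ≤ a₄ ∧ a₄ < ℓ ∧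
  m₂ ≡ m₁ + m₃ + m₄ [MOD ℓ] ∧
  Nat.gcd m₁ ℓ ∣ a₁ ∧ Nat.gcd m₂ ℓ ∣ a₂ ∧ Nat.gcd m₃ ℓ ∣ a₃ ∧ Nat.gcd m₄ ℓ ∣ a₄ ∧
  odot ℓ a₁ m₁ ≡ odot ℓ a₃ m₃ [MOD ℓ] ∧
  odot ℓ a₁ m₁ ≡ odot ℓ a₄ m₄ [MOD ℓ] ∧
  odot ℓ a₁ m₁ + odot ℓ a₂ m₂ ≡ 0 [MOD ℓ] ∧
  a₁ + a₂ + a₃ + a₄ < ℓ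

theorem junior_ghost_datum_four_edges_level_twelve :
    IsJuniorGhostDatum4 12 1 5 2 2 2 2 2 2 := by
  unfold IsJuniorGhostDatum4 odot; decide
end
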